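/- For 0 ≤ k < α ≤ l < M, t ∈ I_M, and x ∈ I_{l+1}(e_k + e_l), the dyadic Fejér kernel satisfies 2^{α} |K_{2^{α}}(x + t)| ≤ 2^{α + k}. -/

import Mathlib

open MeasureTheory Finset

/-- The Walsh group `G = (ℤ/2)^ℕ`. -/
abbrev G : Type := ℕ → ZMod 2

instance : TopologicalSpace (ZMod 2) := ⊥
instance : DiscreteTopology (ZMod 2) := ⟨rfl⟩
noncomputable instance : MeasurableSpace G := borel G
instance : BorelSpace G := ⟨rfl⟩

/-- The normalized Haar measure on `G`. -/
noncomputable def μ : Measure G :=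
  Measure.addHaarMeasure (⊤ : TopologicalSpace.PositiveCompacts G)

/-- Rademacher functions. -/
noncomputable def rad (k : ℕ) (x : G) : ℝ := (-1 : ℝ) ^ (x k).val

/-- Walsh–Paley functions. -/
noncomputable def walsh (n : ℕ) (x : G) : ℝ :=
  ∏ k ∈ Finset.range n, rad k x ^ (n.testBit k).toNat

/-- Walsh–Dirichlet kernels `D_n = ∑_{k<n} w_k`. -/
noncomputable def dirichlet (n : ℕ) (x : G) : ℝ := ∑ k ∈ Finset.range n, walsh k x

/-- Walsh–Fejér kernels `K_n = (1/n) ∑_{k=1}^n D_k`. -/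
noncomputable def fejer (n : ℕ) (x : G) : ℝ :=
  (1 / (n : ℝ)) * ∑ k ∈ Finset.range n, dirichlet (k + 1) x

/-- The cylinder `I_n(x) = {y : y_j = x_j for j < n}`. -/
def cyl (n : ℕ) (x : G) : Set G := {y | ∀ j < n, y j = x j}

/-- `I_n = I_n(0)`. -/
def I (n : ℕ) : Set G := cyl n 0

/-- `e_k` has a `1` in coordinate `k` and `0` elsewhere. -/
def e (k : ℕ) : G := fun j => if j = k then 1 else 0

/-- Walsh–Fourier coefficients. -/
noncomputable def fcoef (f : G → ℝ) (n : ℕ) : ℝ := ∫ x, f x * walsh n x ∂μ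

/-- Walsh partial sums. -/
noncomputable def partialSum (f : G → ℝ) (n : ℕ) (x : G) : ℝ :=
  ∑ k ∈ Finset.range n, fcoef f k * walsh k x

/-- Fejér means `σ_n f = (1/n) ∑_{k=1}^n S_k f`. -/
noncomputable def fejerMean (f : G → ℝ) (n : ℕ) (x : G) : ℝ :=
  (1 / (n : ℝ)) * ∑ k ∈ Finset.range n, partialSum f (k + 1) x

lemma walsh_eq (m N : ℕ) (h : m < 2 ^ N) (x : G) :
    walsh m x = ∏ i ∈ Finset.range N, rad i x ^ (m.testBit i).toNat := by
  unfold walsh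
  rcases le_total m N with hmN | hNm
  · apply Finset.prod_subset (Finset.range_subset_range.2 hmN)
    intro i hi hi'
    simp only [Finset.mem_range, not_lt] at hi'
    rw [Nat.testBit_lt_two_pow (lt_of_lt_of_le (Nat.lt_two_pow_self (n := m)) (Nat.pow_le_pow_right (by norm_num) hi'))]
    rfl
  · symm
    apply Finset.prod_subset (Finset.range_subset_range.2 hNm)
    intro i hi hi'
    simp only [Finset.mem_range, not_lt] at hi'
    rw [Nat.testBit_lt_two_pow (lt_of_lt_of_le h (Nat.pow_le_pow_right (by norm_num) hi'))]
    rfl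

lemma walsh_two_pow_add (n j : ℕ) (hj : j < 2 ^ n) (x : G) :
    walsh (2 ^ n + j) x = rad n x * walsh j x := by
  have h1 : 2 ^ n + j < 2 ^ (n + 1) := by
    rw [pow_succ]; omega
  rw [walsh_eq (2 ^ n + j) (n + 1) h1 x, walsh_eq j n hj x,
    Finset.prod_range_succ, Nat.testBit_two_pow_add_eq,
    Nat.testBit_lt_two_pow hj]
  rw [mul_comm]
  congr 1
  · simp
  · apply Finset.prod_congr rfl
    intro i hi
    rw [Nat.testBit_two_pow_add_gt (Finset.mem_range.1 hi)]

lemma dirichlet_two_pow_add (n j : ℕ) (hj : j ≤ 2 ^ n) (x : G) :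
    dirichlet (2 ^ n + j) x = dirichlet (2 ^ n) x + rad n x * dirichlet j x := by
  unfold dirichlet
  rw [Finset.sum_range_add, Finset.mul_sum]
  congr 1
  apply Finset.sum_congr rfl
  intro i hi
  exact walsh_two_pow_add n i (lt_of_lt_of_le (Finset.mem_range.1 hi) hj) x

lemma dirichlet_two_pow_succ (n : ℕ) (x : G) :
    dirichlet (2 ^ (n + 1)) x = (1 + rad n x) * dirichlet (2 ^ n) x := by
  have : 2 ^ (n + 1) = 2 ^ n + 2 ^ n := by ring
  rw [this, dirichlet_two_pow_add n (2 ^ n) le_rfl x]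
  ring

noncomputable def S (α : ℕ) (z : G) : ℝ := ∑ j ∈ Finset.range (2 ^ α), dirichlet (j + 1) z

lemma S_succ (n : ℕ) (z : G) :
    S (n + 1) z = (1 + rad n z) * S n z + 2 ^ n * dirichlet (2 ^ n) z := by
  unfold S
  have h2 : 2 ^ (n + 1) = 2 ^ n + 2 ^ n := by ring
  rw [h2, Finset.sum_range_add]
  have : ∀ i ∈ Finset.range (2 ^ n), dirichlet (2 ^ n + i + 1) z
      = dirichlet (2 ^ n) z + rad n z * dirichlet (i + 1) z := by
    intro i hi
    rw [show 2 ^ n + i + 1 = 2 ^ n + (i + 1) by ring]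
    exact dirichlet_two_pow_add n (i + 1) (Finset.mem_range.1 hi) z
  rw [Finset.sum_congr rfl this, Finset.sum_add_distrib, ← Finset.mul_sum,
    Finset.sum_const, Finset.card_range, nsmul_eq_mul]
  push_cast
  ring

lemma dirichlet_one (z : G) : dirichlet 1 z = 1 := by
  simp [dirichlet, walsh]

section main
variable {k α : ℕ} {z : G} (hk : k < α) (hz : ∀ j < α, z j = if j = k then 1 else 0)

include hz in
lemma rad_z (j : ℕ) (hj : j < α) : rad j z = if j = k then -1 else 1 := by
  unfold rad
  rw [hz j hj]
  by_cases h : j = k <;> simp [h, ZMod.val_one]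

include hk hz in
lemma dirichlet_two_pow_z (n : ℕ) (hn : n ≤ α) :
    dirichlet (2 ^ n) z = if n ≤ k then (2 : ℝ) ^ n else 0 := by
  induction n with
  | zero => simpa [pow_zero] using dirichlet_one z
  | succ m ih =>
    have hmα : m < α := by omega
    rw [dirichlet_two_pow_succ, ih (by omega), rad_z hz m hmα]
    rcases lt_trichotomy m k with h | h | h
    · rw [if_neg (by omega), if_pos (by omega), if_pos (by omega)]
      ring
    · rw [if_pos (by omega), if_pos (by omega), if_neg (by omega)]
      ring
    · rw [if_neg (by omega), if_neg (by omega), if_neg (by omega)]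
      ring

include hk hz in
lemma S_le_k (n : ℕ) (hn : n ≤ k) : S n z = ((2 : ℝ) ^ n + 4 ^ n) / 2 := by
  induction n with
  | zero => simpa [S] using dirichlet_one z
  | succ m ih =>
    rw [S_succ, ih (by omega), rad_z hz m (by omega),
      dirichlet_two_pow_z hk hz m (by omega), if_neg (by omega), if_pos (by omega)]
    simp only [show (4 : ℝ) = 2 ^ 2 from by norm_num, ← pow_mul]
    push_cast
    ring

include hk hz in
lemma S_gt_k (n : ℕ) (hn1 : k < n) (hn2 : n ≤ α) : S n z = 4 ^ k * 2 ^ (n - k - 1) := by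
  induction n with
  | zero => omega
  | succ m ih =>
    rcases Nat.lt_or_ge k m with h | h
    · rw [S_succ, ih h (by omega), rad_z hz m (by omega),
        dirichlet_two_pow_z hk hz m (by omega), if_neg (by omega), if_neg (by omega)]
      rw [show m + 1 - k - 1 = (m - k - 1) + 1 by omega]
      ring
    · have hm : m = k := by omega
      subst hm
      rw [S_succ, S_le_k hk hz m le_rfl, rad_z hz m (by omega),
        dirichlet_two_pow_z hk hz m (by omega), if_pos le_rfl, if_pos rfl]
      rw [show m + 1 - m - 1 = 0 by omega]
      have : (4 : ℝ) ^ m = 2 ^ m * 2 ^ m := by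
        rw [← mul_pow]; norm_num
      rw [this]
      ring

end main

/-- for `k < α ≤ l < M`, `t ∈ I_M` and `x ∈ I_{l+1}(e_k+e_l)`,
`2^α |K_{2^α}(x+t)| ≤ 2^{α+k}`. -/
theorem fejer_dyadic_bound (M k α l : ℕ) (h1 : k < α) (h2 : α ≤ l) (h3 : l < M)
    (t : G) (ht : t ∈ I M) (x : G) (hx : x ∈ cyl (l + 1) (e k + e l)) :
    (2 : ℝ) ^ α * |fejer (2 ^ α) (x + t)| ≤ (2 : ℝ) ^ (α + k) := by
  set z := x + t with hzdef
  have hz : ∀ j < α, z j = if j = k then 1 else 0 := by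
    intro j hj
    have hxj : x j = (e k + e l) j := hx j (by omega)
    have htj : t j = 0 := ht j (by omega)
    have : z j = x j + t j := rfl
    rw [this, hxj, htj, add_zero]
    have hjl : j ≠ l := by omega
    simp [e, Pi.add_apply, hjl]
  have hS : S α z = 4 ^ k * 2 ^ (α - k - 1) := S_gt_k h1 hz α h1 le_rfl
  have hS' : S α z = 2 ^ (2 * k + (α - k - 1)) := by
    rw [hS, pow_add, pow_mul]; norm_num
  have hf : fejer (2 ^ α) z = (1 / ((2 : ℝ) ^ α)) * S α z := by
    unfold fejer S; norm_num
  rw [hf, hS']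
  have hpos : (0 : ℝ) < 2 ^ α := by positivity
  rw [abs_of_nonneg (by positivity), one_div, ← mul_assoc, mul_inv_cancel₀ (ne_of_gt hpos),
    one_mul]
  have : 2 * k + (α - k - 1) ≤ α + k := by omega
  exact pow_le_pow_right₀ (by norm_num) this
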